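/- arXiv:1409.3560 — 7 statements merged into one kernel-verified Lean document; each statement's English description precedes it below -/
import Mathlib

section
/- Let t : ℝ × ℝ → ℝ be continuous and let a ≤ b, c ≤ d be reals. Then the bounded ∀∃-sentence '∀ x ∈ [a,b], ∃ y ∈ [c,d], t(x,y) > 0' is true if and only if the real number inf_{x ∈ [a,b]} sup_{y ∈ [c,d]} t(x,y) is strictly positive. -/
/-- For a continuous `t : ℝ × ℝ → ℝ` and nonempty compact intervals `[a,b]`, `[c,d]`,
the bounded `∀∃`-sentence `∀ x ∈ [a,b], ∃ y ∈ [c,d], t (x, y) > 0` is true iff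
`inf_{x ∈ [a,b]} sup_{y ∈ [c,d]} t (x, y) > 0`. -/
theorem forall_exists_pos_iff_infSup_pos (t : ℝ × ℝ → ℝ) (ht : Continuous t)
    (a b c d : ℝ) (hab : a ≤ b) (hcd : c ≤ d) :
    (∀ x ∈ Set.Icc a b, ∃ y ∈ Set.Icc c d, t (x, y) > 0) ↔
      0 < sInf ((fun x => sSup ((fun y => t (x, y)) '' Set.Icc c d)) '' Set.Icc a b) := by
  have hKab : IsCompact (Set.Icc a b) := isCompact_Icc
  have hKcd : IsCompact (Set.Icc c d) := isCompact_Icc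
  have hne_ab : (Set.Icc a b).Nonempty := Set.nonempty_Icc.2 hab
  have hne_cd : (Set.Icc c d).Nonempty := Set.nonempty_Icc.2 hcd
  set g : ℝ → ℝ := fun x => sSup ((fun y => t (x, y)) '' Set.Icc c d) with hg
  have hgcont : Continuous g := by
    have : Continuous ↿(fun x y => t (x, y)) := by
      simpa [Function.HasUncurry.uncurry] using ht
    exact hKcd.continuous_sSup this
  -- for each x, the inner image set is compact and nonempty
  have hinner : ∀ x : ℝ, IsCompact ((fun y => t (x, y)) '' Set.Icc c d) := fun x =>
    hKcd.image (ht.comp (Continuous.prodMk_right x))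
  have hinner_ne : ∀ x : ℝ, ((fun y => t (x, y)) '' Set.Icc c d).Nonempty := fun x =>
    hne_cd.image _
  have hSc : IsCompact (g '' Set.Icc a b) := hKab.image hgcont
  have hSne : (g '' Set.Icc a b).Nonempty := hne_ab.image _
  constructor
  · intro h
    obtain ⟨x, hx, hxg⟩ := hSc.sInf_mem hSne
    obtain ⟨y, hy, hty⟩ := h x hx
    rw [← hxg]
    calc (0 : ℝ) < t (x, y) := hty
      _ ≤ g x := le_csSup (hinner x).bddAbove ⟨y, hy, rfl⟩
  · intro h x hx
    have hgx : sInf (g '' Set.Icc a b) ≤ g x := csInf_le hSc.bddBelow ⟨x, hx, rfl⟩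
    have hgxpos : 0 < g x := lt_of_lt_of_le h hgx
    obtain ⟨y, hy, hty⟩ := (hinner x).sSup_mem (hinner_ne x)
    simp only at hty
    exact ⟨y, hy, hty ▸ hgxpos⟩
end

section
/- (Lyapunov's stability theorem, the implication φ_L → φ_S of the paper.) Let f : ℝⁿ → ℝⁿ be continuous with f(0) = 0, and let U be an open neighborhood of the origin. Suppose V : ℝⁿ → ℝ is continuously differentiable on U with V(0) = 0, V(x) > 0 for every x ∈ U \ {0}, and the derivative of V along f is nonpositive on U, i.e. ⟪∇V(x), f(x)⟫ ≤ 0 for all x ∈ U. Then the origin is stable in the sense of Lyapunov for the system ẋ = f(x): for every ε > 0 there exists δ > 0 such that every differentiable function x : [0,∞) → ℝⁿ satisfying x′(t) = f(x(t)) for all t ≥ 0 and ‖x(0)‖ < δ satisfies ‖x(t)‖ < ε for all t ≥ 0. -/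
open RealInnerProductSpace

/-- Lyapunov's stability theorem (the implication `φ_L → φ_S`): if `V` is a
continuously differentiable Lyapunov function for `ẋ = f(x)` on an open
neighborhood `U` of the origin (`V 0 = 0`, `V > 0` on `U \ {0}`, and
`⟪∇V x, f x⟫ ≤ 0` on `U`), then the origin is stable in the sense of Lyapunov. -/
theorem lyapunov_stability (n : ℕ)
    (f : EuclideanSpace ℝ (Fin n) → EuclideanSpace ℝ (Fin n))
    (hf : Continuous f) (hf0 : f 0 = 0)
    (U : Set (EuclideanSpace ℝ (Fin n))) (hU : IsOpen U) (hU0 : (0 : EuclideanSpace ℝ (Fin n)) ∈ U)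
    (V : EuclideanSpace ℝ (Fin n) → ℝ)
    (hV : ContDiffOn ℝ 1 V U)
    (hV0 : V 0 = 0)
    (hVpos : ∀ x ∈ U \ {0}, 0 < V x)
    (hVdec : ∀ x ∈ U, ⟪gradient V x, f x⟫ ≤ 0) :
    ∀ ε > 0, ∃ δ > 0,
      ∀ x : ℝ → EuclideanSpace ℝ (Fin n),
        (∀ t : ℝ, 0 ≤ t → HasDerivWithinAt x (f (x t)) (Set.Ici 0) t) →
        ‖x 0‖ < δ → ∀ t : ℝ, 0 ≤ t → ‖x t‖ < ε := by
  intro ε hε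
  -- trivial case : the space is a subsingleton
  rcases subsingleton_or_nontrivial (EuclideanSpace ℝ (Fin n)) with hs | hnt
  · refine ⟨1, one_pos, fun x _ _ t _ => ?_⟩
    have : x t = 0 := Subsingleton.elim _ _
    simpa [this] using hε
  -- choose r ≤ ε with closed ball of radius r inside U
  obtain ⟨r', hr', hball⟩ := Metric.isOpen_iff.1 hU 0 hU0
  set r : ℝ := min (r' / 2) ε with hr_def
  have hr0 : 0 < r := lt_min (by linarith) hε
  have hrε : r ≤ ε := min_le_right _ _
  have hcb : Metric.closedBall (0 : EuclideanSpace ℝ (Fin n)) r ⊆ U := by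
    intro y hy
    apply hball
    have : ‖y‖ ≤ r := by simpa using hy
    have : ‖y‖ ≤ r' / 2 := le_trans this (min_le_left _ _)
    simp only [Metric.mem_ball, dist_zero_right]
    linarith
  -- minimum of V on the sphere of radius r
  have hsub : Metric.sphere (0 : EuclideanSpace ℝ (Fin n)) r ⊆ U := fun y hy =>
    hcb (Metric.sphere_subset_closedBall hy)
  have hVc : ContinuousOn V U := hV.continuousOn
  have hsph_ne : (Metric.sphere (0 : EuclideanSpace ℝ (Fin n)) r).Nonempty :=
    NormedSpace.sphere_nonempty.2 hr0.le
  obtain ⟨z, hz, hzmin⟩ :=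
    (isCompact_sphere (0 : EuclideanSpace ℝ (Fin n)) r).exists_isMinOn hsph_ne (hVc.mono hsub)
  set m : ℝ := V z with hm_def
  have hm0 : 0 < m := by
    refine hVpos z ⟨hsub hz, ?_⟩
    simp only [Set.mem_singleton_iff]
    intro h0
    rw [h0] at hz
    simp only [Metric.mem_sphere, dist_self] at hz
    exact hr0.ne hz
  -- choose δ : V < m on ball δ and δ ≤ r
  have hVat0 : ContinuousAt V 0 := hVc.continuousAt (hU.mem_nhds hU0)
  have hnb : {y | V y < m} ∈ nhds (0 : EuclideanSpace ℝ (Fin n)) := by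
    have := hVat0.preimage_mem_nhds (Iio_mem_nhds (by simpa [hV0] using hm0))
    simpa [Set.preimage] using this
  obtain ⟨δ', hδ', hδball⟩ := Metric.mem_nhds_iff.1 hnb
  refine ⟨min δ' r, lt_min hδ' hr0, fun x hx hx0 => ?_⟩
  have hx0r : ‖x 0‖ < r := lt_of_lt_of_le hx0 (min_le_right _ _)
  have hx0V : V (x 0) < m := hδball (by
    simp only [Metric.mem_ball, dist_zero_right]
    exact lt_of_lt_of_le hx0 (min_le_left _ _))
  -- continuity of x on [0,∞)
  have hxc : ContinuousOn x (Set.Ici 0) := fun t ht => (hx t ht).continuousWithinAt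
  -- main claim : ‖x t‖ < r for all t ≥ 0
  suffices H : ∀ t : ℝ, 0 ≤ t → ‖x t‖ < r by
    intro t ht; exact lt_of_lt_of_le (H t ht) hrε
  by_contra hcon
  push_neg at hcon
  obtain ⟨t₁, ht₁0, ht₁⟩ := hcon
  -- first hitting time
  set A : Set ℝ := Set.Ici 0 ∩ {t | r ≤ ‖x t‖} with hA_def
  have hA_closed : IsClosed A := by
    have : A = Set.Ici 0 ∩ (fun t => ‖x t‖) ⁻¹' Set.Ici r := rfl
    rw [this]
    exact (continuous_norm.comp_continuousOn hxc).preimage_isClosed_of_isClosed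
      isClosed_Ici isClosed_Ici
  have hA_ne : A.Nonempty := ⟨t₁, ht₁0, ht₁⟩
  have hA_bdd : BddBelow A := ⟨0, fun t ht => ht.1⟩
  set t₀ : ℝ := sInf A with ht₀_def
  have ht₀A : t₀ ∈ A := hA_closed.csInf_mem hA_ne hA_bdd
  have ht₀0 : 0 ≤ t₀ := ht₀A.1
  have ht₀r : r ≤ ‖x t₀‖ := ht₀A.2
  have hlt : ∀ s, 0 ≤ s → s < t₀ → ‖x s‖ < r := by
    intro s hs0 hst
    by_contra h
    push_neg at h
    exact absurd (csInf_le hA_bdd ⟨hs0, h⟩) (not_le.2 hst)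
  have ht₀pos : 0 < t₀ := by
    rcases lt_or_eq_of_le ht₀0 with h | h
    · exact h
    · exact absurd ht₀r (not_le.2 (by rw [← h]; exact hx0r))
  -- ‖x t₀‖ = r by continuity from the left
  have ht₀r' : ‖x t₀‖ ≤ r := by
    have htend : Filter.Tendsto (fun s => ‖x s‖) (nhdsWithin t₀ (Set.Ico 0 t₀)) (nhds ‖x t₀‖) := by
      have := (hxc t₀ (Set.mem_Ici.2 ht₀0)).norm
      exact this.mono_left (nhdsWithin_mono _ (fun s hs => Set.mem_Ici.2 hs.1))
    have hne : (nhdsWithin t₀ (Set.Ico 0 t₀)).NeBot := by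
      apply mem_closure_iff_nhdsWithin_neBot.1
      rw [closure_Ico ht₀pos.ne]
      exact ⟨ht₀0, le_refl _⟩
    exact le_of_tendsto htend (Filter.eventually_of_mem self_mem_nhdsWithin
      fun s hs => (hlt s hs.1 hs.2).le)
  have ht₀eq : ‖x t₀‖ = r := le_antisymm ht₀r' ht₀r
  -- on [0, t₀], x stays in the closed ball ⊆ U
  have hxU : ∀ s ∈ Set.Icc (0:ℝ) t₀, x s ∈ U := by
    intro s hs
    apply hcb
    simp only [Metric.mem_closedBall, dist_zero_right]
    rcases lt_or_eq_of_le hs.2 with h | h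
    · exact (hlt s hs.1 h).le
    · rw [h, ht₀eq]
  -- V ∘ x is antitone on [0, t₀]
  have hVdiff : ∀ y ∈ U, HasFDerivAt V ((InnerProductSpace.toDual ℝ _) (gradient V y)) y := by
    intro y hy
    have : DifferentiableAt ℝ V y :=
      (hV.differentiableOn one_ne_zero).differentiableAt (hU.mem_nhds hy)
    exact this.hasGradientAt.hasFDerivAt
  have hcomp : ∀ s ∈ Set.Icc (0:ℝ) t₀,
      HasDerivWithinAt (fun t => V (x t)) (⟪gradient V (x s), f (x s)⟫) (Set.Icc 0 t₀) s := by
    intro s hs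
    have h1 := (hx s hs.1).mono (Set.Icc_subset_Ici_self : Set.Icc (0:ℝ) t₀ ⊆ Set.Ici 0)
    have h2 := (hVdiff (x s) (hxU s hs)).comp_hasDerivWithinAt s h1
    have h3 : HasDerivWithinAt (fun t => V (x t)) ((InnerProductSpace.toDual ℝ _) (gradient V (x s)) (f (x s))) (Set.Icc 0 t₀) s := h2
    simpa [InnerProductSpace.toDual_apply_apply] using h3
  have hanti : AntitoneOn (fun t => V (x t)) (Set.Icc 0 t₀) := by
    apply antitoneOn_of_deriv_nonpos (convex_Icc 0 t₀)
    · exact hVc.comp (hxc.mono (fun s hs => Set.mem_Ici.2 hs.1)) (fun s hs => hxU s hs)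
    · intro s hs
      rw [interior_Icc] at hs
      have := (hcomp s ⟨hs.1.le, hs.2.le⟩).hasDerivAt
        (Icc_mem_nhds hs.1 hs.2)
      exact this.differentiableAt.differentiableWithinAt
    · intro s hs
      rw [interior_Icc] at hs
      have hd := (hcomp s ⟨hs.1.le, hs.2.le⟩).hasDerivAt (Icc_mem_nhds hs.1 hs.2)
      rw [hd.deriv]
      exact hVdec (x s) (hxU s ⟨hs.1.le, hs.2.le⟩)
  -- contradiction
  have h1 : V (x t₀) ≤ V (x 0) :=
    hanti (Set.left_mem_Icc.2 ht₀0) (Set.right_mem_Icc.2 ht₀0) ht₀0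
  have h2 : m ≤ V (x t₀) := hzmin (by
    simp only [Metric.mem_sphere, dist_zero_right]
    exact ht₀eq)
  linarith
end

section
/- (Kalman controllability test, sufficiency.) Let A be an n×n real matrix and B an n×m real matrix with n, m ≥ 1. If the column span of the Kalman matrix [B AB ⋯ A^{n−1}B] is all of ℝⁿ (i.e., the Kalman matrix has rank n), then for every T > 0 the linear system ẋ = Ax + Bu is controllable on [0,T]: for all x₀, x₁ ∈ ℝⁿ there exist a continuous control u : ℝ → ℝᵐ and a differentiable x : ℝ → ℝⁿ with x(0) = x₀, x′(t) = A·x(t) + B·u(t) for all t ∈ [0,T], and x(T) = x₁. -/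
open Matrix Polynomial Finset

noncomputable def Gop (c : ℕ → ℝ) : ℕ → Polynomial ℝ → Polynomial ℝ
  | 0, p => p
  | (j+1), p => derivative (Gop c j p) + C (c j) * p

lemma Gop_add (c : ℕ → ℝ) (j : ℕ) (p q : Polynomial ℝ) :
    Gop c j (p + q) = Gop c j p + Gop c j q := by
  induction j with
  | zero => rfl
  | succ j ih => simp only [Gop, ih, derivative_add]; ring

lemma Gop_C_mul (c : ℕ → ℝ) (j : ℕ) (a : ℝ) (p : Polynomial ℝ) :
    Gop c j (C a * p) = C a * Gop c j p := by
  induction j with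
  | zero => rfl
  | succ j ih => simp only [Gop, ih, derivative_C_mul]; ring

lemma Gop_structure (c : ℕ → ℝ) (j : ℕ) :
    ∃ a : ℕ → ℝ, a j = 1 ∧
      ∀ p, Gop c j p = ∑ k ∈ range (j+1), C (a k) * derivative^[k] p := by
  induction j with
  | zero => exact ⟨fun _ => 1, rfl, fun p => by simp [Gop]⟩
  | succ j ih =>
    obtain ⟨a, haj, ha⟩ := ih
    refine ⟨fun k => if k = 0 then c j else a (k-1), by simp [haj], fun p => ?_⟩
    show Gop c (j+1) p = _
    rw [Gop, ha p, derivative_sum,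
      Finset.sum_range_succ' (fun k => C (if k = 0 then c j else a (k-1)) * derivative^[k] p) (j+1)]
    simp only [Nat.add_sub_cancel, if_neg (Nat.succ_ne_zero _), if_pos rfl,
      Function.iterate_zero_apply]
    congr 1
    refine Finset.sum_congr rfl fun k _ => ?_
    rw [derivative_C_mul, Function.iterate_succ_apply']

lemma iter_deriv_pow_mul (s : ℝ) (j : ℕ) (r : Polynomial ℝ) :
    ∀ k, k ≤ j → ∃ q : Polynomial ℝ, derivative^[k] ((X - C s)^j * r) =
      C ((j.descFactorial k : ℕ) : ℝ) * ((X - C s)^(j-k) * r) + (X - C s)^(j-k+1) * q := by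
  intro k
  induction k with
  | zero => intro _; exact ⟨0, by simp⟩
  | succ k ih =>
    intro hk
    obtain ⟨q, hq⟩ := ih (le_of_lt hk)
    obtain ⟨i, hi⟩ : ∃ i, j - k = i + 1 := ⟨j - (k+1), by omega⟩
    have hi2 : j - (k+1) = i := by omega
    have h2n : j.descFactorial (k+1) = (i+1) * j.descFactorial k := by
      rw [Nat.descFactorial_succ, hi]
    have h2 : ((j.descFactorial (k+1) : ℕ) : ℝ) = ((i:ℝ)+1) * ((j.descFactorial k : ℕ) : ℝ) := by
      rw [h2n]; push_cast; ring
    rw [hi] at hq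
    refine ⟨C ((j.descFactorial k : ℕ) : ℝ) * derivative r + C ((i:ℝ)+1+1) * q
      + (X - C s) * derivative q, ?_⟩
    rw [Function.iterate_succ_apply', hq, hi2, h2]
    simp only [derivative_add, derivative_mul, derivative_C, derivative_X_sub_C_pow,
      C_add, C_mul, C_1, Nat.cast_add, Nat.cast_one, Nat.cast_ofNat, zero_mul,
      Nat.add_sub_cancel]
    ring

lemma eval_iter_deriv_zero (s : ℝ) (j : ℕ) (r : Polynomial ℝ) (k : ℕ) (hk : k < j) :
    (derivative^[k] ((X - C s)^j * r)).eval s = 0 := by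
  obtain ⟨q, hq⟩ := iter_deriv_pow_mul s j r k (le_of_lt hk)
  obtain ⟨i, hi⟩ : ∃ i, j - k = i + 1 := ⟨j - (k+1), by omega⟩
  rw [hi] at hq
  rw [hq]
  simp [pow_succ]

lemma eval_iter_deriv_self (s : ℝ) (j : ℕ) (r : Polynomial ℝ) :
    (derivative^[j] ((X - C s)^j * r)).eval s = (j.factorial : ℝ) * r.eval s := by
  obtain ⟨q, hq⟩ := iter_deriv_pow_mul s j r j le_rfl
  rw [hq]
  simp [Nat.sub_self, Nat.descFactorial_self, pow_succ]

lemma Gop_eval_zero (c : ℕ → ℝ) (s : ℝ) (n j : ℕ) (hj : j < n) (r : Polynomial ℝ) :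
    (Gop c j ((X - C s)^n * r)).eval s = 0 := by
  obtain ⟨a, -, ha⟩ := Gop_structure c j
  rw [ha, eval_finset_sum]
  refine Finset.sum_eq_zero fun k hk => ?_
  rw [eval_mul, eval_iter_deriv_zero s n r k (by have := mem_range.mp hk; omega), mul_zero]

lemma Gop_interp (c : ℕ → ℝ) (s₀ s₁ : ℝ) (hs : s₁ ≠ s₀) (n : ℕ) (r : ℕ → ℝ) (J : ℕ) :
    ∃ p : Polynomial ℝ, (∃ p', p = (X - C s₀)^n * p') ∧
      ∀ j < J, (Gop c j p).eval s₁ = r j := by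
  induction J with
  | zero => exact ⟨0, ⟨0, by simp⟩, fun j hj => absurd hj (Nat.not_lt_zero j)⟩
  | succ J ih =>
    obtain ⟨p, ⟨p', hp'⟩, hp⟩ := ih
    set qJ : Polynomial ℝ := (X - C s₀)^n * (X - C s₁)^J with hqJ
    have keyz : ∀ i < J, (Gop c i qJ).eval s₁ = 0 := by
      intro i hi
      obtain ⟨a, -, ha⟩ := Gop_structure c i
      rw [ha, eval_finset_sum]
      refine Finset.sum_eq_zero fun k hk => ?_
      rw [eval_mul, show qJ = (X - C s₁)^J * (X - C s₀)^n by rw [hqJ]; ring,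
        eval_iter_deriv_zero s₁ J _ k (by have := mem_range.mp hk; omega), mul_zero]
    have keyJ : (Gop c J qJ).eval s₁ = (J.factorial : ℝ) * (s₁ - s₀)^n := by
      obtain ⟨a, haJ, ha⟩ := Gop_structure c J
      rw [ha, eval_finset_sum, Finset.sum_range_succ]
      rw [show qJ = (X - C s₁)^J * (X - C s₀)^n by rw [hqJ]; ring]
      rw [Finset.sum_eq_zero fun k hk => by
        rw [eval_mul, eval_iter_deriv_zero s₁ J _ k (mem_range.mp hk), mul_zero]]
      rw [eval_mul, eval_iter_deriv_self, haJ, eval_C, eval_pow, eval_sub, eval_X, eval_C]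
      ring
    have hden : (J.factorial : ℝ) * (s₁ - s₀)^n ≠ 0 := by
      refine mul_ne_zero (Nat.cast_ne_zero.mpr (Nat.factorial_ne_zero J)) ?_
      exact pow_ne_zero n (sub_ne_zero.mpr hs)
    set α : ℝ := (r J - (Gop c J p).eval s₁) / ((J.factorial : ℝ) * (s₁ - s₀)^n) with hα
    refine ⟨p + C α * qJ, ⟨p' + C α * (X - C s₁)^J, by rw [hp']; ring⟩, fun j hj => ?_⟩
    rw [Gop_add, eval_add, Gop_C_mul, eval_mul, eval_C]
    rcases Nat.lt_succ_iff_lt_or_eq.mp hj with hj' | rfl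
    · rw [hp j hj', keyz j hj', mul_zero, add_zero]
    · rw [keyJ, hα, div_mul_cancel₀ _ hden]
      ring

lemma CH_sum (n : ℕ) (A : Matrix (Fin n) (Fin n) ℝ) :
    ∑ k ∈ range n, (Matrix.charpoly A).coeff k • A^k = -(A^n) := by
  have h := Matrix.aeval_self_charpoly A
  rw [Polynomial.aeval_eq_sum_range] at h
  rw [Matrix.charpoly_natDegree_eq_dim, Fintype.card_fin, Finset.sum_range_succ] at h
  have hc : (Matrix.charpoly A).coeff n = 1 := by
    have := (Matrix.charpoly_monic A).coeff_natDegree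
    rwa [Matrix.charpoly_natDegree_eq_dim, Fintype.card_fin] at this
  rw [hc, one_smul] at h
  linear_combination (norm := module) h

lemma Gop_succ (c : ℕ → ℝ) (j : ℕ) (p : Polynomial ℝ) :
    Gop c (j+1) p = derivative (Gop c j p) + C (c j) * p := rfl

lemma sum_mulVec' {a b : ℕ} {ι : Type*} (s : Finset ι) (f : ι → Matrix (Fin a) (Fin b) ℝ)
    (y : Fin b → ℝ) : (∑ i ∈ s, f i) *ᵥ y = ∑ i ∈ s, f i *ᵥ y := by
  induction s using Finset.cons_induction with
  | empty => simp [Matrix.zero_mulVec]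
  | cons a s h ih => rw [Finset.sum_cons, Finset.sum_cons, Matrix.add_mulVec, ih]

lemma steer_core (N m : ℕ) (A : Matrix (Fin (N+1)) (Fin (N+1)) ℝ)
    (B : Matrix (Fin (N+1)) (Fin m) ℝ) (v : Fin m → ℝ) (p : Polynomial ℝ) :
    ∃ u : ℝ → (Fin m → ℝ), Continuous u ∧
      ∃ x : ℝ → (Fin (N+1) → ℝ), Differentiable ℝ x ∧
        (∀ t, HasDerivAt x (A *ᵥ x t + B *ᵥ u t) t) ∧
        x = fun t => ∑ k ∈ range (N+1),
          (Gop (fun j => (Matrix.charpoly A).coeff (N-j)) (N-k) p).eval t •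
            ((A^k) *ᵥ (B *ᵥ v)) := by
  set c : ℕ → ℝ := fun j => (Matrix.charpoly A).coeff (N-j) with hc
  set w : ℕ → (Fin (N+1) → ℝ) := fun k => (A^k) *ᵥ (B *ᵥ v) with hwdef
  set g : ℕ → Polynomial ℝ := fun k => Gop c (N-k) p with hgdef
  set u : ℝ → (Fin m → ℝ) := fun t => (Gop c (N+1) p).eval t • v with hu
  set x : ℝ → (Fin (N+1) → ℝ) := fun t => ∑ k ∈ range (N+1), (g k).eval t • w k with hx
  have hw : ∀ k, A *ᵥ w k = w (k+1) := fun k => by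
    rw [hwdef]
    simp only
    rw [Matrix.mulVec_mulVec, ← pow_succ']
  have hw0 : w 0 = B *ᵥ v := by rw [hwdef]; simp [Matrix.one_mulVec]
  have hgN : g N = p := by rw [hgdef]; simp only [Nat.sub_self]; rfl
  have hg : ∀ k ≤ N, derivative (g k) =
      (if k = 0 then Gop c (N+1) p else g (k-1)) - C ((Matrix.charpoly A).coeff k) * p := by
    intro k hk
    rcases Nat.eq_zero_or_pos k with rfl | hk0
    · rw [if_pos rfl, Gop_succ]
      have : c N = (Matrix.charpoly A).coeff 0 := by rw [hc]; simp
      rw [this, hgdef]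
      simp only [Nat.sub_zero]
      ring
    · rw [if_neg (by omega), hgdef]
      simp only
      have h1 : N - (k-1) = (N - k) + 1 := by omega
      have h3 : N - (N - k) = k := by omega
      have h2 : c (N - k) = (Matrix.charpoly A).coeff k := by
        simp only [hc]
        rw [h3]
      rw [h1, Gop_succ, h2]
      ring
  have hderiv : ∀ t, HasDerivAt x (∑ k ∈ range (N+1), (derivative (g k)).eval t • w k) t :=
    fun t => HasDerivAt.fun_sum fun k _ => (Polynomial.hasDerivAt (g k) t).smul_const (w k)
  have key : ∀ t, (∑ k ∈ range (N+1), (derivative (g k)).eval t • w k)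
      = A *ᵥ x t + B *ᵥ u t := by
    intro t
    have hRHS : A *ᵥ x t + B *ᵥ u t
        = ∑ k ∈ range (N+1), (g k).eval t • w (k+1) + (Gop c (N+1) p).eval t • w 0 := by
      rw [hx, hu]
      simp only
      rw [Matrix.mulVec_smul, ← hw0]
      congr 1
      rw [← Matrix.mulVecLin_apply, map_sum]
      refine Finset.sum_congr rfl fun k _ => ?_
      rw [LinearMap.map_smul, Matrix.mulVecLin_apply, hw]
    rw [hRHS]
    have hLHS : ∑ k ∈ range (N+1), (derivative (g k)).eval t • w k
        = ∑ k ∈ range (N+1), ((if k = 0 then Gop c (N+1) p else g (k-1)).eval t • w k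
            - ((Matrix.charpoly A).coeff k * p.eval t) • w k) := by
      refine Finset.sum_congr rfl fun k hk => ?_
      rw [hg k (by have := mem_range.mp hk; omega)]
      rw [eval_sub, eval_mul, eval_C, sub_smul]
    rw [hLHS, Finset.sum_sub_distrib]
    have hfirst : ∑ k ∈ range (N+1), (if k = 0 then Gop c (N+1) p else g (k-1)).eval t • w k
        = ∑ k ∈ range N, (g k).eval t • w (k+1) + (Gop c (N+1) p).eval t • w 0 := by
      rw [Finset.sum_range_succ'
        (fun k => (if k = 0 then Gop c (N+1) p else g (k-1)).eval t • w k) N]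
      simp
    have hsecond : ∑ k ∈ range (N+1), ((Matrix.charpoly A).coeff k * p.eval t) • w k
        = - (p.eval t • w (N+1)) := by
      have : ∑ k ∈ range (N+1), ((Matrix.charpoly A).coeff k * p.eval t) • w k
          = p.eval t • ((∑ k ∈ range (N+1), (Matrix.charpoly A).coeff k • A^k) *ᵥ (B *ᵥ v)) := by
        rw [sum_mulVec', Finset.smul_sum]
        refine Finset.sum_congr rfl fun k _ => ?_
        rw [Matrix.smul_mulVec, hwdef]
        simp only
        rw [smul_smul, mul_comm]
      rw [this, CH_sum, Matrix.neg_mulVec, smul_neg]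
    rw [hfirst, hsecond, sub_neg_eq_add]
    have hlast : ∑ k ∈ range (N+1), (g k).eval t • w (k+1)
        = ∑ k ∈ range N, (g k).eval t • w (k+1) + p.eval t • w (N+1) := by
      rw [Finset.sum_range_succ, hgN]
    rw [hlast]
    abel
  refine ⟨u, ?_, x, ?_, fun t => key t ▸ hderiv t, rfl⟩
  · exact (Polynomial.continuous _).smul continuous_const
  · exact fun t => ((hderiv t).differentiableAt)

lemma steer_pair (N m : ℕ) (A : Matrix (Fin (N+1)) (Fin (N+1)) ℝ)
    (B : Matrix (Fin (N+1)) (Fin m) ℝ) (k : ℕ) (hk : k < N+1) (v : Fin m → ℝ)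
    (s₀ s₁ : ℝ) (hs : s₁ ≠ s₀) :
    ∃ u : ℝ → (Fin m → ℝ), Continuous u ∧
      ∃ x : ℝ → (Fin (N+1) → ℝ), Differentiable ℝ x ∧
        (∀ t, HasDerivAt x (A *ᵥ x t + B *ᵥ u t) t) ∧
        x s₀ = 0 ∧ x s₁ = (A^k) *ᵥ (B *ᵥ v) := by
  obtain ⟨p, ⟨p', hp'⟩, hp⟩ := Gop_interp (fun j => (Matrix.charpoly A).coeff (N-j)) s₀ s₁ hs
    (N+1) (fun j => if j = N - k then 1 else 0) (N+1)
  obtain ⟨u, hu, x, hx, hode, hxeq⟩ := steer_core N m A B v p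
  refine ⟨u, hu, x, hx, hode, ?_, ?_⟩
  · rw [hxeq]
    refine Finset.sum_eq_zero fun k' _ => ?_
    rw [hp', Gop_eval_zero _ s₀ (N+1) (N - k') (by omega) p', zero_smul]
  · rw [hxeq]
    beta_reduce
    rw [Finset.sum_eq_single k]
    · rw [hp (N-k) (by omega), if_pos rfl, one_smul]
    · intro k' hk' hne
      rw [hp (N-k') (by omega), if_neg (by have := mem_range.mp hk'; omega), zero_smul]
    · intro h
      exact absurd (mem_range.mpr hk) h

/-- Kalman controllability test, sufficiency: if the column span of the Kalman
matrix `[B AB ⋯ A^(n-1)B]` is all of `ℝⁿ`, then for every `T > 0` the linear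
system `ẋ = Ax + Bu` is controllable on `[0,T]`. -/
theorem kalman_rank_condition_implies_controllable (n m : ℕ) (hn : 1 ≤ n) (hm : 1 ≤ m)
    (A : Matrix (Fin n) (Fin n) ℝ) (B : Matrix (Fin n) (Fin m) ℝ)
    (hK : Submodule.span ℝ
        {w : Fin n → ℝ | ∃ k < n, ∃ v : Fin m → ℝ, w = (A ^ k) *ᵥ (B *ᵥ v)} = ⊤) :
    ∀ T : ℝ, 0 < T → ∀ x₀ x₁ : Fin n → ℝ,
      ∃ u : ℝ → (Fin m → ℝ), Continuous u ∧
        ∃ x : ℝ → (Fin n → ℝ), Differentiable ℝ x ∧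
          x 0 = x₀ ∧
          (∀ t ∈ Set.Icc (0 : ℝ) T, HasDerivAt x (A *ᵥ x t + B *ᵥ u t) t) ∧
          x T = x₁ := by
  obtain ⟨N, rfl⟩ : ∃ N, n = N + 1 := ⟨n - 1, by omega⟩
  set V := (Fin (N+1) → ℝ)
  set gens : Set V := {w : V | ∃ k < N+1, ∃ v : Fin m → ℝ, w = (A ^ k) *ᵥ (B *ᵥ v)} with hgens
  intro T hT x₀ x₁
  set Cset : Set (V × V) := {q | ∃ u : ℝ → (Fin m → ℝ), Continuous u ∧
      ∃ x : ℝ → V, Differentiable ℝ x ∧ x 0 = q.1 ∧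
        (∀ t ∈ Set.Icc (0:ℝ) T, HasDerivAt x (A *ᵥ x t + B *ᵥ u t) t) ∧ x T = q.2} with hCset
  have hzero : (0 : V × V) ∈ Cset := by
    refine ⟨fun _ => 0, continuous_const, fun _ => 0, differentiable_const 0, rfl, ?_, rfl⟩
    intro t _
    have : A *ᵥ (0 : V) + B *ᵥ (0 : Fin m → ℝ) = 0 := by
      rw [Matrix.mulVec_zero, Matrix.mulVec_zero, add_zero]
    rw [this]
    exact hasDerivAt_const t 0
  have hadd : ∀ {a b : V × V}, a ∈ Cset → b ∈ Cset → a + b ∈ Cset := by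
    rintro a b ⟨ua, hua, xa, hxa, ha0, hade, haT⟩ ⟨ub, hub, xb, hxb, hb0, hbde, hbT⟩
    refine ⟨fun t => ua t + ub t, hua.add hub, fun t => xa t + xb t, hxa.add hxb, ?_, ?_, ?_⟩
    · simp [ha0, hb0]
    · intro t ht
      have := (hade t ht).add (hbde t ht)
      convert this using 1
      case e'_4 => rfl
      case e'_5 => rfl
      case e'_6 => rfl
      case e'_8 => rfl
      rw [Matrix.mulVec_add, Matrix.mulVec_add]
      abel
    · simp [haT, hbT]
  have hsmul : ∀ (a : ℝ) {q : V × V}, q ∈ Cset → a • q ∈ Cset := by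
    rintro a q ⟨u, hu, x, hx, h0, hde, hT'⟩
    refine ⟨fun t => a • u t, (continuous_const (y := a)).smul hu,
      fun t => a • x t, hx.const_smul a, ?_, ?_, ?_⟩
    · simp [h0]
    · intro t ht
      have := (hde t ht).const_smul a
      convert this using 1
      case e'_4 => rfl
      case e'_5 => rfl
      case e'_6 => rfl
      case e'_8 => rfl
      rw [smul_add, Matrix.mulVec_smul, Matrix.mulVec_smul]
    · simp [hT']
  let S : Submodule ℝ (V × V) :=
    { carrier := Cset, add_mem' := hadd, zero_mem' := hzero, smul_mem' := hsmul }
  have hgen0 : ∀ w ∈ gens, ((0 : V), w) ∈ S := by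
    rintro w ⟨k, hk, v, rfl⟩
    obtain ⟨u, hu, x, hx, hode, h0, h1⟩ := steer_pair N m A B k hk v 0 T (ne_of_gt hT)
    exact ⟨u, hu, x, hx, h0, fun t _ => hode t, h1⟩
  have hgen1 : ∀ w ∈ gens, (w, (0 : V)) ∈ S := by
    rintro w ⟨k, hk, v, rfl⟩
    obtain ⟨u, hu, x, hx, hode, h0, h1⟩ := steer_pair N m A B k hk v T 0 (ne_of_lt hT)
    exact ⟨u, hu, x, hx, h1, fun t _ => hode t, h0⟩
  have hmem : ∀ y : V, ((y, (0:V)) ∈ S) ∧ (((0:V), y) ∈ S) := by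
    intro y
    have hy : y ∈ Submodule.span ℝ gens := by rw [hK]; trivial
    constructor
    · have hle : Submodule.span ℝ gens ≤ Submodule.comap (LinearMap.inl ℝ V V) S :=
        Submodule.span_le.mpr fun w hw => hgen1 w hw
      exact hle hy
    · have hle : Submodule.span ℝ gens ≤ Submodule.comap (LinearMap.inr ℝ V V) S :=
        Submodule.span_le.mpr fun w hw => hgen0 w hw
      exact hle hy
  have : (x₀, x₁) ∈ S := by
    have : (x₀, x₁) = (x₀, (0:V)) + ((0:V), x₁) := by simp
    rw [this]
    exact S.add_mem (hmem x₀).1 (hmem x₁).2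
  obtain ⟨u, hu, x, hx, h0, hd, h1⟩ := this
  exact ⟨u, hu, x, hx, h0, hd, h1⟩
end

section
/- (Kalman controllability test, necessity.) Let A be an n×n real matrix and B an n×m real matrix with n, m ≥ 1. If for some T > 0 the linear system ẋ = Ax + Bu is controllable on [0,T] (for all x₀, x₁ ∈ ℝⁿ there exist a continuous control u : ℝ → ℝᵐ and a differentiable x : ℝ → ℝⁿ with x(0) = x₀, x′(t) = A·x(t) + B·u(t) for all t ∈ [0,T], and x(T) = x₁), then the column span of the Kalman matrix [B AB ⋯ A^{n−1}B] is all of ℝⁿ. -/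
open Matrix NormedSpace Polynomial

attribute [local instance] Matrix.linftyOpSemiNormedRing Matrix.linftyOpNormedRing
  Matrix.linftyOpNormedAlgebra

/-- Kalman controllability test, necessity: if for some `T > 0` the linear system
`ẋ = Ax + Bu` is controllable on `[0,T]`, then the column span of the Kalman
matrix `[B AB ⋯ A^(n-1)B]` is all of `ℝⁿ`. -/
theorem controllable_implies_kalman_rank_condition (n m : ℕ) (hn : 1 ≤ n) (hm : 1 ≤ m)
    (A : Matrix (Fin n) (Fin n) ℝ) (B : Matrix (Fin n) (Fin m) ℝ)
    (T : ℝ) (hT : 0 < T)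
    (hctrl : ∀ x₀ x₁ : Fin n → ℝ,
      ∃ u : ℝ → (Fin m → ℝ), Continuous u ∧
        ∃ x : ℝ → (Fin n → ℝ), Differentiable ℝ x ∧
          x 0 = x₀ ∧
          (∀ t ∈ Set.Icc (0 : ℝ) T, HasDerivAt x (A *ᵥ x t + B *ᵥ u t) t) ∧
          x T = x₁) :
    Submodule.span ℝ
        {w : Fin n → ℝ | ∃ k < n, ∃ v : Fin m → ℝ, w = (A ^ k) *ᵥ (B *ᵥ v)} = ⊤ := by
  by_contra hS
  set S : Submodule ℝ (Fin n → ℝ) :=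
    Submodule.span ℝ {w : Fin n → ℝ | ∃ k < n, ∃ v : Fin m → ℝ, w = (A ^ k) *ᵥ (B *ᵥ v)} with hSdef
  obtain ⟨f, hf0, hfbot⟩ := Submodule.exists_dual_map_eq_bot_of_lt_top
    (lt_top_iff_ne_top.mpr hS) inferInstance
  -- `f` kills everything in `S`
  have hfS : ∀ w ∈ S, f w = 0 := by
    intro w hw
    have : f w ∈ S.map f := Submodule.mem_map_of_mem hw
    rwa [hfbot, Submodule.mem_bot] at this
  -- `f` kills `A^k B v` for `k < n`
  have hfk : ∀ k < n, ∀ v : Fin m → ℝ, f ((A ^ k) *ᵥ (B *ᵥ v)) = 0 := by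
    intro k hk v
    exact hfS _ (Submodule.subset_span ⟨k, hk, v, rfl⟩)
  -- extend to all `k` using Cayley–Hamilton
  have hfk' : ∀ (k : ℕ) (v : Fin m → ℝ), f ((A ^ k) *ᵥ (B *ᵥ v)) = 0 := by
    intro k v
    rcases lt_or_ge k n with hk | hk
    · exact hfk k hk v
    · have hmonic : A.charpoly.Monic := A.charpoly_monic
      have hchne : A.charpoly ≠ 1 := by
        intro h1
        have := A.charpoly_natDegree_eq_dim
        rw [h1] at this
        simp [Fintype.card_fin] at this
        omega
      have hdeg : ((X : ℝ[X]) ^ k %ₘ A.charpoly).natDegree < n := by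
        have := Polynomial.natDegree_modByMonic_lt ((X : ℝ[X]) ^ k) hmonic hchne
        rwa [A.charpoly_natDegree_eq_dim, Fintype.card_fin] at this
      let L : Matrix (Fin n) (Fin n) ℝ →ₗ[ℝ] ℝ :=
        { toFun := fun M => f (M *ᵥ (B *ᵥ v))
          map_add' := fun M N => by
            simp only [Matrix.add_mulVec, map_add]
          map_smul' := fun c M => by
            simp only [Matrix.smul_mulVec, _root_.map_smul, RingHom.id_apply] }
      have hLpow : ∀ i < n, L (A ^ i) = 0 := fun i hi => hfk i hi v
      show L (A ^ k) = 0
      rw [Matrix.pow_eq_aeval_mod_charpoly, Polynomial.aeval_eq_sum_range' hdeg, map_sum]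
      refine Finset.sum_eq_zero fun i hi => ?_
      rw [_root_.map_smul, hLpow i (Finset.mem_range.mp hi), smul_zero]
  -- `f` kills `exp(s • A) B v` for all `s`
  have hexp : ∀ (s : ℝ) (w : Fin m → ℝ), f (exp (s • A) *ᵥ (B *ᵥ w)) = 0 := by
    intro s w
    let L : Matrix (Fin n) (Fin n) ℝ →ₗ[ℝ] ℝ :=
      { toFun := fun M => f (M *ᵥ (B *ᵥ w))
        map_add' := fun M N => by simp only [Matrix.add_mulVec, map_add]
        map_smul' := fun c M => by
          simp only [Matrix.smul_mulVec, _root_.map_smul, RingHom.id_apply] }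
    let L' : Matrix (Fin n) (Fin n) ℝ →L[ℝ] ℝ := LinearMap.toContinuousLinearMap L
    have : f (exp (s • A) *ᵥ (B *ᵥ w)) = L' (exp (s • A)) := rfl
    rw [this, exp_eq_tsum ℝ, ContinuousLinearMap.map_tsum L' (expSeries_summable' (𝕂 := ℝ) (s • A))]
    have hterm : ∀ k : ℕ, L' (((k.factorial : ℝ))⁻¹ • (s • A) ^ k) = 0 := by
      intro k
      rw [_root_.map_smul]
      have h1 : ((s • A : Matrix (Fin n) (Fin n) ℝ)) ^ k = s ^ k • A ^ k := smul_pow s A k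
      rw [h1, _root_.map_smul]
      have h2 : L' (A ^ k) = 0 := hfk' k w
      rw [h2, smul_zero, smul_zero]
    simp only [hterm, tsum_zero]
  -- pick a target `c` with `f c ≠ 0`
  obtain ⟨c, hc⟩ : ∃ c, f c ≠ 0 := by
    by_contra h
    push_neg at h
    exact hf0 (LinearMap.ext fun z => h z)
  obtain ⟨u, hu, x, hxdiff, hx0, hode, hxT⟩ := hctrl 0 c
  set E : ℝ → Matrix (Fin n) (Fin n) ℝ := fun t => exp ((T - t) • A) with hEdef
  -- derivative of E
  have hE : ∀ t : ℝ, HasDerivAt E (-(A * E t)) t := by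
    intro t
    have h1 : HasDerivAt (fun s : ℝ => exp (s • A)) (exp ((T - t) • A) * A) (T - t) :=
      hasDerivAt_exp_smul_const (𝕂 := ℝ) A (T - t)
    have h2 : HasDerivAt (fun s : ℝ => T - s) (-1) t := by
      simpa using ((hasDerivAt_id t).const_sub T)
    have h3 : HasDerivAt E ((-1 : ℝ) • (exp ((T - t) • A) * A)) t :=
      HasDerivAt.scomp_of_eq t h1 h2 rfl
    have hcomm : Commute (exp ((T - t) • A)) A :=
      (((Commute.refl A).smul_left (T - t)).exp_left)
    convert h3 using 1
    rw [hcomm.eq]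
    simp
    rfl
  -- the auxiliary scalar function
  set g : ℝ → ℝ := fun t => f (E t *ᵥ x t) with hgdef
  have hg : ∀ t ∈ Set.Icc (0 : ℝ) T, HasDerivAt g 0 t := by
    intro t ht
    have hx' := hode t ht
    -- coordinatewise derivative of F t = E t *ᵥ x t
    have hF : HasDerivAt (fun t => E t *ᵥ x t)
        ((-(A * E t)) *ᵥ x t + E t *ᵥ (A *ᵥ x t + B *ᵥ u t)) t := by
      rw [hasDerivAt_pi]
      intro i
      have hcoord : ∀ j, HasDerivAt (fun t => E t i j) ((-(A * E t)) i j) t := by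
        intro j
        let e : Matrix (Fin n) (Fin n) ℝ →ₗ[ℝ] ℝ :=
          { toFun := fun M => M i j
            map_add' := fun M N => rfl
            map_smul' := fun c M => rfl }
        exact (LinearMap.toContinuousLinearMap e).hasFDerivAt.comp_hasDerivAt t (hE t)
      have hxcoord : ∀ j, HasDerivAt (fun t => x t j) ((A *ᵥ x t + B *ᵥ u t) j) t := by
        intro j
        exact (hasDerivAt_pi.mp hx') j
      have hsum : HasDerivAt (fun t => ∑ j, E t i j * x t j)
          (∑ j, ((-(A * E t)) i j * x t j + E t i j * ((A *ᵥ x t + B *ᵥ u t) j))) t := by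
        refine HasDerivAt.fun_sum fun j _ => ?_
        exact (hcoord j).mul (hxcoord j)
      have e2 : ((-(A * E t)) *ᵥ x t + E t *ᵥ (A *ᵥ x t + B *ᵥ u t)) i
          = ∑ j, ((-(A * E t)) i j * x t j + E t i j * ((A *ᵥ x t + B *ᵥ u t) j)) := by
        simp [Matrix.mulVec, dotProduct, Finset.sum_add_distrib]
      rw [e2]
      exact hsum
    have hgF : HasDerivAt g (f ((-(A * E t)) *ᵥ x t + E t *ᵥ (A *ᵥ x t + B *ᵥ u t))) t :=
      (LinearMap.toContinuousLinearMap f).hasFDerivAt.comp_hasDerivAt t hF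
    convert hgF using 1
    have hcomm : Commute (E t) A := (((Commute.refl A).smul_left (T - t)).exp_left)
    have : (-(A * E t)) *ᵥ x t + E t *ᵥ (A *ᵥ x t + B *ᵥ u t) = E t *ᵥ (B *ᵥ u t) := by
      rw [← hcomm.eq]
      rw [Matrix.mulVec_add, Matrix.neg_mulVec, ← Matrix.mulVec_mulVec]
      abel
    rw [this, hexp (T - t) (u t)]
  -- g is constant on [0, T]
  have hcont : ContinuousOn g (Set.Icc 0 T) := fun t ht =>
    (hg t ht).continuousAt.continuousWithinAt
  have hderiv : ∀ t ∈ Set.Ico (0 : ℝ) T, HasDerivWithinAt g 0 (Set.Ici t) t := fun t ht =>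
    (hg t ⟨ht.1, ht.2.le⟩).hasDerivWithinAt
  have hconst := constant_of_has_deriv_right_zero hcont hderiv T
    (Set.right_mem_Icc.mpr hT.le)
  -- evaluate at the endpoints
  have hgT : g T = f c := by
    simp only [hgdef, hEdef, hxT, sub_self, zero_smul, exp_zero, Matrix.one_mulVec]
  have hg0 : g 0 = 0 := by
    simp only [hgdef, hx0, Matrix.mulVec_zero, map_zero]
  rw [hgT, hg0] at hconst
  exact hc hconst
end

section
/- Let A be an n×n real matrix and B an n×m real matrix with n, m ≥ 1, and let T > 0. The set of states reachable from the origin at time T, namely { ∫₀ᵀ exp((T−s)·A) *ᵥ (B *ᵥ u(s)) ds : u : ℝ → ℝᵐ continuous }, is exactly the column span of the Kalman matrix [B AB ⋯ A^{n−1}B]. -/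
open Matrix

private lemma my_sum_mulVec {ι : Type*} {n m : ℕ} (s : Finset ι)
    (M : ι → Matrix (Fin n) (Fin m) ℝ) (w : Fin m → ℝ) :
    (∑ i ∈ s, M i) *ᵥ w = ∑ i ∈ s, (M i) *ᵥ w := by
  induction s using Finset.cons_induction with
  | empty => simp
  | cons a s ha ih => simp [Finset.sum_cons, Matrix.add_mulVec, ih]

/-- Powers of `A` applied to the column space of `B` stay in the Kalman span
(Cayley–Hamilton). -/
private lemma kalman_pow_mem {n m : ℕ} (hn : 1 ≤ n) (A : Matrix (Fin n) (Fin n) ℝ)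
    (B : Matrix (Fin n) (Fin m) ℝ) (k : ℕ) (v : Fin m → ℝ) :
    (A ^ k) *ᵥ (B *ᵥ v) ∈ Submodule.span ℝ
      {w : Fin n → ℝ | ∃ k < n, ∃ v : Fin m → ℝ, w = (A ^ k) *ᵥ (B *ᵥ v)} := by
  induction k using Nat.strong_induction_on with
  | _ k ih =>
    by_cases hk : k < n
    · exact Submodule.subset_span ⟨k, hk, v, rfl⟩
    · push_neg at hk
      have hlead : A.charpoly.coeff n = 1 := by
        have h1 := (Matrix.charpoly_monic A).leadingCoeff
        rwa [Polynomial.leadingCoeff, Matrix.charpoly_natDegree_eq_dim, Fintype.card_fin] at h1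
      have hCH : A ^ n = -∑ i ∈ Finset.range n, A.charpoly.coeff i • A ^ i := by
        have h0 := Matrix.aeval_self_charpoly A
        rw [Polynomial.aeval_eq_sum_range, Matrix.charpoly_natDegree_eq_dim, Fintype.card_fin,
          Finset.sum_range_succ, hlead, one_smul] at h0
        exact eq_neg_of_add_eq_zero_right h0
      have hk' : A ^ k = ∑ i ∈ Finset.range n, (-(A.charpoly.coeff i)) • A ^ (k - n + i) := by
        have h2 : A ^ k = A ^ (k - n) * A ^ n := by rw [← pow_add]; congr 1; omega
        rw [h2, hCH, mul_neg, Finset.mul_sum, ← Finset.sum_neg_distrib]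
        refine Finset.sum_congr rfl fun i _ => ?_
        rw [mul_smul_comm, ← pow_add, neg_smul]
      have hv : (A ^ k) *ᵥ (B *ᵥ v)
          = ∑ i ∈ Finset.range n, (-(A.charpoly.coeff i)) • ((A ^ (k - n + i)) *ᵥ (B *ᵥ v)) := by
        rw [hk', my_sum_mulVec]
        exact Finset.sum_congr rfl fun i _ => Matrix.smul_mulVec _ _ _
      rw [hv]
      refine Submodule.sum_mem _ fun i hi => Submodule.smul_mem _ _ ?_
      have hi' : i < n := Finset.mem_range.mp hi
      exact ih (k - n + i) (by omega)

/-- `exp(r • A)` applied to the column space of `B` stays in the Kalman span. -/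
private lemma kalman_exp_mem {n m : ℕ} (hn : 1 ≤ n) (A : Matrix (Fin n) (Fin n) ℝ)
    (B : Matrix (Fin n) (Fin m) ℝ) (r : ℝ) (x : Fin m → ℝ) :
    (NormedSpace.exp (r • A)) *ᵥ (B *ᵥ x) ∈ Submodule.span ℝ
      {w : Fin n → ℝ | ∃ k < n, ∃ v : Fin m → ℝ, w = (A ^ k) *ᵥ (B *ᵥ v)} := by
  letI : SeminormedRing (Matrix (Fin n) (Fin n) ℝ) := Matrix.linftyOpSemiNormedRing
  letI : NormedRing (Matrix (Fin n) (Fin n) ℝ) := Matrix.linftyOpNormedRing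
  letI : NormedAlgebra ℝ (Matrix (Fin n) (Fin n) ℝ) := Matrix.linftyOpNormedAlgebra
  set K := Submodule.span ℝ
      {w : Fin n → ℝ | ∃ k < n, ∃ v : Fin m → ℝ, w = (A ^ k) *ᵥ (B *ᵥ v)} with hK
  set w : Fin n → ℝ := B *ᵥ x with hw
  let L : Matrix (Fin n) (Fin n) ℝ →ₗ[ℝ] (Fin n → ℝ) :=
    { toFun := fun M => M *ᵥ w
      map_add' := fun M N => Matrix.add_mulVec M N w
      map_smul' := fun c M => Matrix.smul_mulVec c M w }
  let L' := LinearMap.toContinuousLinearMap L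
  have hs := (NormedSpace.expSeries_hasSum_exp (𝕂 := ℝ) (r • A)).mapL L'
  have hcl : IsClosed (K : Set (Fin n → ℝ)) := Submodule.closed_of_finiteDimensional K
  have hmem := hcl.mem_of_tendsto hs (Filter.Eventually.of_forall ?_)
  · exact hmem
  · intro F
    refine Submodule.sum_mem _ fun k _ => ?_
    have h1 : L' (NormedSpace.expSeries ℝ (Matrix (Fin n) (Fin n) ℝ) k fun _ => r • A)
        = ((k.factorial : ℝ)⁻¹ * r ^ k) • ((A ^ k) *ᵥ w) := by
      rw [NormedSpace.expSeries_apply_eq]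
      show ((k.factorial : ℝ)⁻¹ • (r • A) ^ k) *ᵥ w = _
      rw [smul_pow, smul_smul, Matrix.smul_mulVec]
    have hmem' := Submodule.smul_mem K ((k.factorial : ℝ)⁻¹ * r ^ k) (kalman_pow_mem hn A B k x)
    rw [← h1] at hmem'
    exact hmem'

/-- If a linear functional kills `exp(t•A) *ᵥ w` for all `t ∈ [0,T]`, it kills
`A^i *ᵥ w` for all `i`. -/
private lemma phi_pow_eq_zero {n : ℕ} (A : Matrix (Fin n) (Fin n) ℝ) (w : Fin n → ℝ)
    (φ : Module.Dual ℝ (Fin n → ℝ)) {T : ℝ} (hT : 0 < T)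
    (h0 : ∀ t ∈ Set.Icc (0 : ℝ) T, φ ((NormedSpace.exp (t • A)) *ᵥ w) = 0) (i : ℕ) :
    φ ((A ^ i) *ᵥ w) = 0 := by
  letI : SeminormedRing (Matrix (Fin n) (Fin n) ℝ) := Matrix.linftyOpSemiNormedRing
  letI : NormedRing (Matrix (Fin n) (Fin n) ℝ) := Matrix.linftyOpNormedRing
  letI : NormedAlgebra ℝ (Matrix (Fin n) (Fin n) ℝ) := Matrix.linftyOpNormedAlgebra
  set g : ℕ → ℝ → ℝ := fun i t => φ ((A ^ i * NormedSpace.exp (t • A)) *ᵥ w) with hg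
  have hderiv : ∀ i t, HasDerivAt (g i) (g (i + 1) t) t := by
    intro i t
    let L : Matrix (Fin n) (Fin n) ℝ →ₗ[ℝ] ℝ :=
      { toFun := fun M => φ ((A ^ i * M) *ᵥ w)
        map_add' := by
          intro M N
          show φ ((A ^ i * (M + N)) *ᵥ w) = φ ((A ^ i * M) *ᵥ w) + φ ((A ^ i * N) *ᵥ w)
          rw [mul_add, Matrix.add_mulVec, map_add]
        map_smul' := by
          intro c M
          show φ ((A ^ i * (c • M)) *ᵥ w) = c • φ ((A ^ i * M) *ᵥ w)
          rw [mul_smul_comm, Matrix.smul_mulVec, _root_.map_smul] }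
    have hexp : HasDerivAt (fun t : ℝ => NormedSpace.exp (t • A))
        (A * NormedSpace.exp (t • A)) t := hasDerivAt_exp_smul_const' A t
    have h := ((LinearMap.toContinuousLinearMap L).hasFDerivAt
        (x := NormedSpace.exp (t • A))).comp_hasDerivAt t hexp
    have hfun : (⇑(LinearMap.toContinuousLinearMap L) ∘ fun t : ℝ => NormedSpace.exp (t • A))
        = g i := by
      funext s
      simp only [Function.comp_apply, LinearMap.coe_toContinuousLinearMap']
      rfl
    have hval : (LinearMap.toContinuousLinearMap L) (A * NormedSpace.exp (t • A))
        = g (i + 1) t := by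
      simp only [LinearMap.coe_toContinuousLinearMap']
      show φ ((A ^ i * (A * NormedSpace.exp (t • A))) *ᵥ w) = _
      rw [← mul_assoc, ← pow_succ]
    rw [hfun] at h
    rw [← hval]
    exact h
  have hzero : ∀ i, ∀ t ∈ Set.Icc (0 : ℝ) T, g i t = 0 := by
    intro i
    induction i with
    | zero =>
      intro t ht
      have := h0 t ht
      simpa [hg] using this
    | succ i ih =>
      have hIoo : ∀ s ∈ Set.Ioo (0 : ℝ) T, g (i + 1) s = 0 := by
        intro s hs
        have h1 : HasDerivAt (g i) (g (i + 1) s) s := hderiv i s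
        have h2 : (fun _ : ℝ => (0 : ℝ)) =ᶠ[nhds s] g i := by
          filter_upwards [Icc_mem_nhds hs.1 hs.2] with x hx
          exact (ih x hx).symm
        have h3 : HasDerivAt (fun _ : ℝ => (0 : ℝ)) (g (i + 1) s) s :=
          h1.congr_of_eventuallyEq h2
        exact ((hasDerivAt_const s (0 : ℝ)).unique h3).symm
      have hcont : Continuous (g (i + 1)) :=
        continuous_iff_continuousAt.mpr fun s => (hderiv (i + 1) s).continuousAt
      have hcl : Set.EqOn (g (i + 1)) (fun _ => (0 : ℝ)) (closure (Set.Ioo (0 : ℝ) T)) :=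
        Set.EqOn.closure (fun x hx => hIoo x hx) hcont continuous_const
      rw [closure_Ioo hT.ne] at hcl
      exact fun t ht => hcl ht
  have := hzero i 0 ⟨le_refl 0, hT.le⟩
  simpa [hg, NormedSpace.exp_zero] using this

/-- A continuous nonnegative function with zero integral on `[0,T]` vanishes there. -/
private lemma eq_zero_of_integral_zero {T : ℝ} (hT : 0 < T) {F : ℝ → ℝ} (hc : Continuous F)
    (hnn : ∀ s, 0 ≤ F s) (hI : ∫ s in (0 : ℝ)..T, F s = 0) :
    ∀ s ∈ Set.Icc (0 : ℝ) T, F s = 0 := by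
  have hInt : MeasureTheory.IntegrableOn F (Set.Ioc 0 T) := by
    have h := hc.intervalIntegrable (μ := MeasureTheory.volume) 0 T
    rwa [intervalIntegrable_iff_integrableOn_Ioc_of_le hT.le] at h
  rw [intervalIntegral.integral_of_le hT.le] at hI
  have hae : F =ᵐ[MeasureTheory.volume.restrict (Set.Ioc 0 T)] 0 :=
    (MeasureTheory.integral_eq_zero_iff_of_nonneg hnn hInt).mp hI
  have hIoo : ∀ s ∈ Set.Ioo (0 : ℝ) T, F s = 0 := by
    intro s hs
    by_contra hFs
    have hpos : 0 < F s := lt_of_le_of_ne (hnn s) (Ne.symm hFs)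
    set U := F ⁻¹' Set.Ioi (F s / 2) ∩ Set.Ioo 0 T with hU
    have hUopen : IsOpen U := (isOpen_Ioi.preimage hc).inter isOpen_Ioo
    have hsU : s ∈ U := ⟨by simp only [Set.mem_preimage, Set.mem_Ioi]; linarith, hs⟩
    have hnull : MeasureTheory.volume.restrict (Set.Ioc 0 T) {x | ¬ F x = (0 : ℝ → ℝ) x} = 0 :=
      MeasureTheory.ae_iff.mp hae
    have hUsub : U ⊆ {x | ¬ F x = (0 : ℝ → ℝ) x} := by
      intro x hx
      have : F s / 2 < F x := hx.1
      simp only [Set.mem_setOf_eq, Pi.zero_apply]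
      intro h; rw [h] at this; linarith
    have h1 : MeasureTheory.volume.restrict (Set.Ioc 0 T) U = 0 :=
      MeasureTheory.measure_mono_null hUsub hnull
    have h2 : MeasureTheory.volume.restrict (Set.Ioc 0 T) U = MeasureTheory.volume U := by
      rw [MeasureTheory.Measure.restrict_apply hUopen.measurableSet]
      congr 1
      refine Set.inter_eq_left.mpr ?_
      exact fun x hx => Set.Ioo_subset_Ioc_self hx.2
    have h3 : 0 < MeasureTheory.volume U := hUopen.measure_pos _ ⟨s, hsU⟩
    rw [h2] at h1
    exact h3.ne' h1
  intro s hs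
  have hcl : Set.EqOn F (fun _ => (0 : ℝ)) (closure (Set.Ioo (0 : ℝ) T)) :=
    Set.EqOn.closure (fun x hx => hIoo x hx) hc continuous_const
  rw [closure_Ioo hT.ne] at hcl
  exact hcl hs

/-- The set of states reachable from the origin at time `T > 0` by the system
`ẋ = Ax + Bu` with continuous controls, namely
`{ ∫₀ᵀ exp((T-s)•A) *ᵥ (B *ᵥ u s) ds : u continuous }`, is exactly the column
span of the Kalman matrix `[B AB ⋯ A^(n-1)B]`. -/
theorem reachable_set_eq_kalman_span (n m : ℕ) (hn : 1 ≤ n) (hm : 1 ≤ m)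
    (A : Matrix (Fin n) (Fin n) ℝ) (B : Matrix (Fin n) (Fin m) ℝ)
    (T : ℝ) (hT : 0 < T) :
    {y : Fin n → ℝ | ∃ u : ℝ → (Fin m → ℝ), Continuous u ∧
        y = ∫ s in (0 : ℝ)..T, (NormedSpace.exp ((T - s) • A)) *ᵥ (B *ᵥ u s)} =
      ↑(Submodule.span ℝ
        {w : Fin n → ℝ | ∃ k < n, ∃ v : Fin m → ℝ, w = (A ^ k) *ᵥ (B *ᵥ v)}) := by
  letI : SeminormedRing (Matrix (Fin n) (Fin n) ℝ) := Matrix.linftyOpSemiNormedRing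
  letI : NormedRing (Matrix (Fin n) (Fin n) ℝ) := Matrix.linftyOpNormedRing
  letI : NormedAlgebra ℝ (Matrix (Fin n) (Fin n) ℝ) := Matrix.linftyOpNormedAlgebra
  set K := Submodule.span ℝ
      {w : Fin n → ℝ | ∃ k < n, ∃ v : Fin m → ℝ, w = (A ^ k) *ᵥ (B *ᵥ v)} with hKdef
  -- continuity of the integrand for any continuous control
  have contf : ∀ u : ℝ → (Fin m → ℝ), Continuous u →
      Continuous fun s => (NormedSpace.exp ((T - s) • A)) *ᵥ (B *ᵥ u s) := by
    intro u hu
    refine Continuous.matrix_mulVec ?_ (Continuous.matrix_mulVec continuous_const hu)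
    letI : NormedAlgebra ℚ (Matrix (Fin n) (Fin n) ℝ) := NormedAlgebra.restrictScalars ℚ ℝ _
    exact NormedSpace.exp_continuous.comp ((continuous_const.sub continuous_id).smul
      continuous_const)
  ext y
  simp only [Set.mem_setOf_eq, SetLike.mem_coe]
  constructor
  · -- forward inclusion
    rintro ⟨u, hu, rfl⟩
    by_contra hy
    obtain ⟨φ, hφy, hφK⟩ := Submodule.exists_dual_map_eq_bot_of_notMem hy inferInstance
    have hφ0 : ∀ z ∈ K, φ z = 0 := by
      intro z hz
      have : φ z ∈ K.map φ := Submodule.mem_map_of_mem hz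
      rwa [hφK, Submodule.mem_bot] at this
    have hint : IntervalIntegrable
        (fun s => (NormedSpace.exp ((T - s) • A)) *ᵥ (B *ᵥ u s))
        MeasureTheory.volume 0 T := (contf u hu).intervalIntegrable 0 T
    have hcomm := (LinearMap.toContinuousLinearMap φ).intervalIntegral_comp_comm hint
    have hval : φ (∫ s in (0 : ℝ)..T, (NormedSpace.exp ((T - s) • A)) *ᵥ (B *ᵥ u s))
        = ∫ s in (0 : ℝ)..T, φ ((NormedSpace.exp ((T - s) • A)) *ᵥ (B *ᵥ u s)) := by
      exact hcomm.symm
    have hzero : (∫ s in (0 : ℝ)..T,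
        φ ((NormedSpace.exp ((T - s) • A)) *ᵥ (B *ᵥ u s))) = 0 := by
      have : ∀ s : ℝ, φ ((NormedSpace.exp ((T - s) • A)) *ᵥ (B *ᵥ u s)) = 0 := by
        intro s
        exact hφ0 _ (kalman_exp_mem hn A B (T - s) (u s))
      simp only [this]
      simp
    exact hφy (hval.trans hzero)
  · -- reverse inclusion
    intro hy
    let Rsub : Submodule ℝ (Fin n → ℝ) :=
      { carrier := {y : Fin n → ℝ | ∃ u : ℝ → (Fin m → ℝ), Continuous u ∧
          y = ∫ s in (0 : ℝ)..T, (NormedSpace.exp ((T - s) • A)) *ᵥ (B *ᵥ u s)}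
        add_mem' := by
          rintro a b ⟨u₁, hu₁, rfl⟩ ⟨u₂, hu₂, rfl⟩
          refine ⟨u₁ + u₂, hu₁.add hu₂, ?_⟩
          have heq : ∀ s : ℝ, (NormedSpace.exp ((T - s) • A)) *ᵥ (B *ᵥ (u₁ + u₂) s)
              = (NormedSpace.exp ((T - s) • A)) *ᵥ (B *ᵥ u₁ s)
                + (NormedSpace.exp ((T - s) • A)) *ᵥ (B *ᵥ u₂ s) := by
            intro s
            simp [Matrix.mulVec_add]
          rw [intervalIntegral.integral_congr (g := fun s =>
              (NormedSpace.exp ((T - s) • A)) *ᵥ (B *ᵥ u₁ s)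
                + (NormedSpace.exp ((T - s) • A)) *ᵥ (B *ᵥ u₂ s)) (fun s _ => heq s),
            intervalIntegral.integral_add ((contf u₁ hu₁).intervalIntegrable 0 T)
              ((contf u₂ hu₂).intervalIntegrable 0 T)]
        zero_mem' := by
          refine ⟨fun _ => 0, continuous_const, ?_⟩
          simp [Matrix.mulVec_zero]
        smul_mem' := by
          rintro c a ⟨u, hu, rfl⟩
          refine ⟨c • u, hu.const_smul c, ?_⟩
          have heq : ∀ s : ℝ, (NormedSpace.exp ((T - s) • A)) *ᵥ (B *ᵥ (c • u) s)
              = c • ((NormedSpace.exp ((T - s) • A)) *ᵥ (B *ᵥ u s)) := by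
            intro s
            simp [Matrix.mulVec_smul]
          rw [intervalIntegral.integral_congr (g := fun s =>
              c • ((NormedSpace.exp ((T - s) • A)) *ᵥ (B *ᵥ u s))) (fun s _ => heq s),
            intervalIntegral.integral_smul] }
    suffices hle : K ≤ Rsub by exact hle hy
    rw [hKdef]
    rw [Submodule.span_le]
    rintro w ⟨k, hk, v, rfl⟩
    by_contra hw
    obtain ⟨φ, hφw, hφR⟩ := Submodule.exists_dual_map_eq_bot_of_notMem hw inferInstance
    have hφ0 : ∀ z ∈ Rsub, φ z = 0 := by
      intro z hz
      have : φ z ∈ Rsub.map φ := Submodule.mem_map_of_mem hz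
      rwa [hφR, Submodule.mem_bot] at this
    -- basis vectors
    set e : Fin m → (Fin m → ℝ) := fun j => fun j' => if j = j' then (1 : ℝ) else 0 with he
    set c : ℝ → (Fin m → ℝ) :=
      fun s j => φ ((NormedSpace.exp ((T - s) • A)) *ᵥ (B *ᵥ e j)) with hc
    have hccont : Continuous c := by
      refine continuous_pi fun j => ?_
      exact (LinearMap.toContinuousLinearMap φ).continuous.comp (contf _ continuous_const)
    -- the linear functional decomposition
    have hdecomp : ∀ (s : ℝ) (x : Fin m → ℝ),
        φ ((NormedSpace.exp ((T - s) • A)) *ᵥ (B *ᵥ x)) = ∑ j, x j * c s j := by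
      intro s x
      let ψ : (Fin m → ℝ) →ₗ[ℝ] ℝ :=
        φ ∘ₗ (Matrix.mulVecLin (NormedSpace.exp ((T - s) • A))) ∘ₗ (Matrix.mulVecLin B)
      have h1 : ∀ x, ψ x = φ ((NormedSpace.exp ((T - s) • A)) *ᵥ (B *ᵥ x)) := fun _ => rfl
      rw [← h1, LinearMap.pi_apply_eq_sum_univ ψ x]
      refine Finset.sum_congr rfl fun j _ => ?_
      rw [smul_eq_mul, h1]
    -- the reachable point with control `c`
    have hmem : (∫ s in (0 : ℝ)..T, (NormedSpace.exp ((T - s) • A)) *ᵥ (B *ᵥ c s)) ∈ Rsub :=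
      ⟨c, hccont, rfl⟩
    have hφint : φ (∫ s in (0 : ℝ)..T, (NormedSpace.exp ((T - s) • A)) *ᵥ (B *ᵥ c s)) = 0 :=
      hφ0 _ hmem
    have hcomm := (LinearMap.toContinuousLinearMap φ).intervalIntegral_comp_comm
      ((contf c hccont).intervalIntegrable (μ := MeasureTheory.volume) 0 T)
    have hintzero : (∫ s in (0 : ℝ)..T, ∑ j, c s j * c s j) = 0 := by
      have h2 : (∫ s in (0 : ℝ)..T, ∑ j, c s j * c s j)
          = ∫ s in (0 : ℝ)..T, φ ((NormedSpace.exp ((T - s) • A)) *ᵥ (B *ᵥ c s)) := by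
        refine intervalIntegral.integral_congr fun s _ => ?_
        rw [hdecomp s (c s)]
      rw [h2]
      rw [show (fun s => φ ((NormedSpace.exp ((T - s) • A)) *ᵥ (B *ᵥ c s)))
          = fun s => (LinearMap.toContinuousLinearMap φ)
            ((NormedSpace.exp ((T - s) • A)) *ᵥ (B *ᵥ c s)) from rfl]
      rw [hcomm]
      simpa using hφint
    -- hence c vanishes on [0,T]
    have hFcont : Continuous fun s => ∑ j, c s j * c s j := by
      refine continuous_finset_sum _ fun j _ => ?_
      exact ((continuous_apply j).comp hccont).mul ((continuous_apply j).comp hccont)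
    have hFnn : ∀ s, 0 ≤ ∑ j, c s j * c s j :=
      fun s => Finset.sum_nonneg fun j _ => mul_self_nonneg _
    have hFz := eq_zero_of_integral_zero hT hFcont hFnn hintzero
    have hcz : ∀ s ∈ Set.Icc (0 : ℝ) T, ∀ j, c s j = 0 := by
      intro s hs j
      have h3 := hFz s hs
      have h4 : c s j * c s j = 0 := by
        have := (Finset.sum_eq_zero_iff_of_nonneg
          (fun j _ => mul_self_nonneg (c s j))).mp h3 j (Finset.mem_univ j)
        exact this
      exact mul_self_eq_zero.mp h4
    -- hence φ kills A^i B e j for all i, j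
    have hpow : ∀ (i : ℕ) (j : Fin m), φ ((A ^ i) *ᵥ (B *ᵥ e j)) = 0 := by
      intro i j
      refine phi_pow_eq_zero A (B *ᵥ e j) φ hT ?_ i
      intro t ht
      have hs : T - t ∈ Set.Icc (0 : ℝ) T := ⟨by linarith [ht.2], by linarith [ht.1]⟩
      have := hcz (T - t) hs j
      rw [hc] at this
      simpa [show T - (T - t) = t by ring] using this
    -- conclude φ kills the generator, contradiction
    have hfinal : φ ((A ^ k) *ᵥ (B *ᵥ v)) = 0 := by
      let ψ : (Fin m → ℝ) →ₗ[ℝ] ℝ :=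
        φ ∘ₗ (Matrix.mulVecLin (A ^ k)) ∘ₗ (Matrix.mulVecLin B)
      have h1 : ∀ x, ψ x = φ ((A ^ k) *ᵥ (B *ᵥ x)) := fun _ => rfl
      rw [← h1, LinearMap.pi_apply_eq_sum_univ ψ v]
      refine Finset.sum_eq_zero fun j _ => ?_
      rw [h1]
      have := hpow k j
      rw [show (fun j' => if j = j' then (1 : ℝ) else 0) = e j from rfl]
      rw [this, smul_zero]
    exact hφw hfinal
end

section
/- Let A be an n×n real matrix with n ≥ 1. For every real t, the matrix exponential exp(t·A) lies in the linear span of the matrix powers {A⁰ = I, A, A², …, A^{n−1}}, i.e. exp(t·A) ∈ Submodule.span ℝ { A^k : 0 ≤ k < n }. -/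
open Matrix

theorem pow_mem_span_aux (n : ℕ) (hn : 1 ≤ n) (A : Matrix (Fin n) (Fin n) ℝ) (j : ℕ) :
    A ^ j ∈ Submodule.span ℝ {M : Matrix (Fin n) (Fin n) ℝ | ∃ k < n, M = A ^ k} := by
  set S := Submodule.span ℝ {M : Matrix (Fin n) (Fin n) ℝ | ∃ k < n, M = A ^ k} with hS
  have hbase : ∀ k, k < n → A ^ k ∈ S := fun k hk =>
    Submodule.subset_span ⟨k, hk, rfl⟩
  have hAn : A ^ n ∈ S := by
    have h := A.aeval_self_charpoly
    have hdeg : A.charpoly.natDegree = n := by simp [A.charpoly_natDegree_eq_dim]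
    have hmonic := A.charpoly_monic
    -- A^n = -(∑ i in range n, coeff i • A^i)
    have := Polynomial.aeval_eq_sum_range (R := ℝ) (p := A.charpoly) A
    rw [h, hdeg] at this
    have hc : A.charpoly.coeff n = 1 := by simpa [hdeg] using hmonic.coeff_natDegree
    rw [Finset.sum_range_succ, hc, one_smul] at this
    have : A ^ n = -∑ i ∈ Finset.range n, A.charpoly.coeff i • A ^ i :=
      eq_neg_of_add_eq_zero_right this.symm
    rw [this]
    exact neg_mem (Submodule.sum_mem _ fun i hi =>
      Submodule.smul_mem _ _ (hbase i (Finset.mem_range.mp hi)))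
  induction j with
  | zero => exact hbase 0 hn
  | succ j ih =>
    -- A^(j+1) = A * A^j ; left mult by A is linear and maps generators into S
    have : A ^ (j + 1) = A * A ^ j := by rw [pow_succ']
    rw [this]
    have : A ^ j ∈ S := ih
    refine Submodule.span_induction ?_ ?_ ?_ ?_ this
    · rintro x ⟨k, hk, rfl⟩
      rw [← pow_succ']
      rcases lt_or_eq_of_le (Nat.succ_le_of_lt hk) with h | h
      · exact hbase _ h
      · rw [show k + 1 = n from h]; exact hAn
    · simp
    · intro x y _ _ hx hy
      rw [mul_add]; exact add_mem hx hy
    · intro c x _ hx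
      rw [Matrix.mul_smul]; exact Submodule.smul_mem _ _ hx

/-- Consequence of the Cayley–Hamilton theorem: for every real `t`, the matrix
exponential `exp (t • A)` lies in the linear span of `{A^0 = I, A, …, A^(n-1)}`. -/
theorem exp_smul_mem_span_pow (n : ℕ) (hn : 1 ≤ n)
    (A : Matrix (Fin n) (Fin n) ℝ) (t : ℝ) :
    NormedSpace.exp (t • A) ∈
      Submodule.span ℝ {M : Matrix (Fin n) (Fin n) ℝ | ∃ k < n, M = A ^ k} := by
  letI : SeminormedRing (Matrix (Fin n) (Fin n) ℝ) := Matrix.linftyOpSemiNormedRing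
  letI : NormedRing (Matrix (Fin n) (Fin n) ℝ) := Matrix.linftyOpNormedRing
  letI : NormedAlgebra ℝ (Matrix (Fin n) (Fin n) ℝ) := Matrix.linftyOpNormedAlgebra
  set S := Submodule.span ℝ {M : Matrix (Fin n) (Fin n) ℝ | ∃ k < n, M = A ^ k} with hS
  have hsum := NormedSpace.expSeries_hasSum_exp (𝕂 := ℝ) (t • A)
  have hclosed : IsClosed (S : Set (Matrix (Fin n) (Fin n) ℝ)) :=
    Submodule.closed_of_finiteDimensional S
  refine hclosed.mem_of_tendsto hsum (Filter.Eventually.of_forall fun s => ?_)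
  refine Submodule.sum_mem _ fun j _ => ?_
  rw [NormedSpace.expSeries_apply_eq, smul_pow]
  exact Submodule.smul_mem _ _ (Submodule.smul_mem _ _ (pow_mem_span_aux n hn A j))
end

section
/- Let A be an n×n complex matrix such that every eigenvalue μ of A (every element of the spectrum of A over ℂ) satisfies Re(μ) < 0. Then the matrix exponential exp(t·A) tends to the zero matrix as t → ∞; in particular, for every initial state x₀ ∈ ℂⁿ, the solution x(t) = exp(t·A) *ᵥ x₀ of the linear system ẋ = Ax converges to 0 as t → ∞. -/
open Matrix Filter

/-- `t ^ j * exp (c * t) → 0` as `t → ∞` for `c < 0`. -/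
lemma aux_pow_exp {c : ℝ} (hc : c < 0) (j : ℕ) :
    Tendsto (fun t : ℝ => t ^ j * Real.exp (c * t)) atTop (nhds 0) := by
  have h1 : Tendsto (fun t : ℝ => (-c) * t) atTop atTop :=
    Filter.Tendsto.const_mul_atTop (by linarith) tendsto_id
  have h2 := (Real.tendsto_pow_mul_exp_neg_atTop_nhds_zero j).comp h1
  have h3 := h2.const_mul (((-c) ^ j)⁻¹)
  rw [mul_zero] at h3
  refine h3.congr' ?_
  filter_upwards [eventually_ge_atTop 0] with t ht
  have hcj : ((-c) ^ j : ℝ) ≠ 0 := pow_ne_zero j (by linarith)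
  simp only [Function.comp]
  rw [mul_pow, show -(-c * t) = c * t from by ring]
  field_simp

/-- Convergence along a generalized eigenvector with eigenvalue of negative real part. -/
lemma aux_key {n : ℕ} (A : Matrix (Fin n) (Fin n) ℂ) (μ : ℂ) (hμ : μ.re < 0)
    (x : Fin n → ℂ) (k : ℕ) (hx : ((A - μ • 1) ^ k) *ᵥ x = 0) :
    Tendsto (fun t : ℝ => (NormedSpace.exp ((t : ℂ) • A)) *ᵥ x) atTop (nhds 0) := by
  set N : Matrix (Fin n) (Fin n) ℂ := A - μ • 1 with hN
  have hdecomp : ∀ t : ℝ, (t : ℂ) • A = ((t : ℂ) * μ) • (1 : Matrix (Fin n) (Fin n) ℂ)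
      + (t : ℂ) • N := by
    intro t
    rw [hN, smul_sub, smul_smul]
    abel
  letI : SeminormedRing (Matrix (Fin n) (Fin n) ℂ) := Matrix.linftyOpSemiNormedRing
  letI : NormedRing (Matrix (Fin n) (Fin n) ℂ) := Matrix.linftyOpNormedRing
  letI : NormedAlgebra ℂ (Matrix (Fin n) (Fin n) ℂ) := Matrix.linftyOpNormedAlgebra
  have hexp : ∀ t : ℝ, NormedSpace.exp ((t : ℂ) • A)
      = Complex.exp ((t : ℂ) * μ) • NormedSpace.exp ((t : ℂ) • N) := by
    intro t
    rw [hdecomp t,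
      Matrix.exp_add_of_commute _ _ ((Commute.one_left ((t : ℂ) • N)).smul_left _)]
    have h1 : (((t : ℂ) * μ) • (1 : Matrix (Fin n) (Fin n) ℂ))
        = algebraMap ℂ _ ((t : ℂ) * μ) := (Algebra.algebraMap_eq_smul_one _).symm
    rw [h1, show NormedSpace.exp (algebraMap ℂ (Matrix (Fin n) (Fin n) ℂ) ((t : ℂ) * μ)) = algebraMap ℂ _ (NormedSpace.exp ((t : ℂ) * μ)) from (NormedSpace.algebraMap_exp_comm _).symm, ← Algebra.smul_def, Complex.exp_eq_exp_ℂ]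
  -- `M ↦ M *ᵥ x` as a linear map
  let φ : Matrix (Fin n) (Fin n) ℂ →ₗ[ℂ] (Fin n → ℂ) :=
    { toFun := fun M => M *ᵥ x,
      map_add' := fun M M' => Matrix.add_mulVec M M' x,
      map_smul' := fun c M => smul_mulVec c M x }
  have hφc : Continuous φ := LinearMap.continuous_of_finiteDimensional φ
  have hsum : ∀ t : ℝ, NormedSpace.exp ((t : ℂ) • N) *ᵥ x
      = ∑ j ∈ Finset.range k, ((t : ℂ) ^ j * ((Nat.factorial j : ℂ))⁻¹) • (N ^ j *ᵥ x) := by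
    intro t
    have h := (NormedSpace.exp_series_hasSum_exp' (𝕂 := ℂ) ((t : ℂ) • N)).map
      φ.toAddMonoidHom hφc
    have heq : ∀ j : ℕ, (φ.toAddMonoidHom ∘ fun j => ((Nat.factorial j : ℂ))⁻¹ • ((t : ℂ) • N) ^ j) j
        = ((t : ℂ) ^ j * ((Nat.factorial j : ℂ))⁻¹) • (N ^ j *ᵥ x) := by
      intro j
      show φ (((Nat.factorial j : ℂ))⁻¹ • ((t : ℂ) • N) ^ j) = _
      rw [LinearMap.map_smul φ, smul_pow]
      show ((Nat.factorial j : ℂ))⁻¹ • ((((t : ℂ) ^ j • N ^ j)) *ᵥ x) = _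
      rw [smul_mulVec, smul_smul, mul_comm]
    have h2 : (φ.toAddMonoidHom : Matrix (Fin n) (Fin n) ℂ → Fin n → ℂ)
        (NormedSpace.exp ((t : ℂ) • N)) = NormedSpace.exp ((t : ℂ) • N) *ᵥ x := rfl
    rw [← h2, show φ.toAddMonoidHom (NormedSpace.exp ((t : ℂ) • N)) = _ from h.tsum_eq.symm, tsum_congr heq]
    refine tsum_eq_sum ?_
    intro j hj
    have hjk : k ≤ j := le_of_not_gt (fun h' => hj (Finset.mem_range.mpr h'))
    have hz : N ^ j *ᵥ x = 0 := by
      rw [← Nat.sub_add_cancel hjk, pow_add, ← Matrix.mulVec_mulVec, hx, Matrix.mulVec_zero]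
    rw [hz, smul_zero]
  have hrepr : ∀ t : ℝ, (NormedSpace.exp ((t : ℂ) • A)) *ᵥ x
      = ∑ j ∈ Finset.range k,
          (Complex.exp ((t : ℂ) * μ) * ((t : ℂ) ^ j * ((Nat.factorial j : ℂ))⁻¹)) • (N ^ j *ᵥ x) := by
    intro t
    rw [hexp t, smul_mulVec, hsum t, Finset.smul_sum]
    simp [smul_smul]
  rw [funext hrepr]
  have h0 : (0 : Fin n → ℂ) = ∑ _j ∈ Finset.range k, (0 : Fin n → ℂ) := by simp
  rw [h0]
  refine tendsto_finset_sum _ fun j _ => ?_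
  refine squeeze_zero_norm (fun t => le_of_eq rfl) ?_
  have hb : Tendsto (fun t : ℝ => (t ^ j * Real.exp (μ.re * t)) * (((Nat.factorial j : ℝ))⁻¹ * ‖N ^ j *ᵥ x‖))
      atTop (nhds 0) := by
    have := (aux_pow_exp hμ j).mul_const (((Nat.factorial j : ℝ))⁻¹ * ‖N ^ j *ᵥ x‖)
    rwa [zero_mul] at this
  refine hb.congr' ?_
  filter_upwards [eventually_ge_atTop 0] with t ht
  rw [norm_smul, norm_mul, norm_mul, Complex.norm_exp]
  have h1 : ((t : ℂ) * μ).re = μ.re * t := by simp [mul_comm]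
  rw [h1, norm_pow, Complex.norm_real, Real.norm_eq_abs, abs_of_nonneg ht]
  have h2 : ‖((Nat.factorial j : ℂ))⁻¹‖ = ((Nat.factorial j : ℝ))⁻¹ := by
    rw [norm_inv]
    norm_num
  rw [h2]
  ring

/-- Asymptotic stability of linear systems: if every eigenvalue of the complex
matrix `A` has negative real part, then `exp (t • A) → 0` as `t → ∞`, and in
particular every solution `t ↦ exp (t • A) *ᵥ x₀` of `ẋ = Ax` converges to `0`. -/
theorem exp_smul_tendsto_zero_of_spectrum_re_neg (n : ℕ)
    (A : Matrix (Fin n) (Fin n) ℂ)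
    (hA : ∀ μ ∈ spectrum ℂ A, μ.re < 0) :
    Tendsto (fun t : ℝ => NormedSpace.exp ((t : ℂ) • A)) atTop (nhds 0) ∧
      ∀ x₀ : Fin n → ℂ,
        Tendsto (fun t : ℝ => (NormedSpace.exp ((t : ℂ) • A)) *ᵥ x₀) atTop (nhds 0) := by
  have main : ∀ x₀ : Fin n → ℂ,
      Tendsto (fun t : ℝ => (NormedSpace.exp ((t : ℂ) • A)) *ᵥ x₀) atTop (nhds 0) := by
    set L : Module.End ℂ (Fin n → ℂ) := Matrix.toLinAlgEquiv' A with hL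
    let S : Submodule ℂ (Fin n → ℂ) :=
      { carrier := {x | Tendsto (fun t : ℝ => (NormedSpace.exp ((t : ℂ) • A)) *ᵥ x)
          atTop (nhds 0)},
        add_mem' := by
          intro a b ha hb
          have h := ha.add hb
          rw [add_zero] at h
          refine h.congr fun t => ?_
          rw [← Matrix.mulVec_add],
        zero_mem' := by
          simp only [Set.mem_setOf_eq, Matrix.mulVec_zero]
          exact tendsto_const_nhds,
        smul_mem' := by
          intro c a ha
          have h := ha.const_smul c
          rw [smul_zero] at h
          refine h.congr fun t => ?_
          rw [← Matrix.mulVec_smul] }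
    have hS : ∀ μ : ℂ, (Module.End.maxGenEigenspace L μ) ≤ S := by
      intro μ x hx
      rcases (Module.End.mem_maxGenEigenspace L μ x).mp hx with ⟨k, hk⟩
      by_cases hx0 : x = 0
      · rw [hx0]; exact S.zero_mem
      have hval : L.HasEigenvalue μ := by
        refine Module.End.hasEigenvalue_of_hasGenEigenvalue (k := k) ?_
        refine (Submodule.ne_bot_iff _).mpr ⟨x, ?_, hx0⟩
        rw [Module.End.genEigenspace_nat]
        exact LinearMap.mem_ker.mpr hk
      have hμspec : μ ∈ spectrum ℂ A := by
        rw [← AlgEquiv.spectrum_eq Matrix.toLinAlgEquiv' A]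
        exact Module.End.hasEigenvalue_iff_mem_spectrum.mp hval
      refine aux_key A μ (hA μ hμspec) x k ?_
      have hmap : (L - μ • 1) ^ k = Matrix.toLinAlgEquiv' ((A - μ • 1) ^ k) := by
        rw [map_pow, map_sub]
        congr 2
        rw [_root_.map_smul, _root_.map_one]
      rw [hmap] at hk
      exact hk
    intro x₀
    have htop : x₀ ∈ (⊤ : Submodule ℂ (Fin n → ℂ)) := trivial
    rw [← Module.End.iSup_maxGenEigenspace_eq_top L] at htop
    exact (iSup_le hS : ⨆ μ, Module.End.maxGenEigenspace L μ ≤ S) htop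
  refine ⟨?_, main⟩
  refine tendsto_pi_nhds.mpr ?_
  intro i
  rw [tendsto_pi_nhds]
  intro j
  have h := tendsto_pi_nhds.mp (main (Pi.single j 1)) i
  refine h.congr fun t => ?_
  rw [Matrix.mulVec_single]
  simp
end
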